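/- (Algebraic core of Proposition 3.4, prop_redu_end.) Let A and B be abelian groups such that the endomorphism ring End(B) is commutative (i.e. e₁ ∘ e₂ = e₂ ∘ e₁ for all additive endomorphisms e₁, e₂ of B), and such that every additive endomorphism of B that factors through A is nilpotent. If f is a bijective additive endomorphism of A × B whose block component f_AA is an automorphism of A, then the block component f_BB is an automorphism of B. -/

import Mathlib

/-- The block components of an additive endomorphism of `A × B`. -/
def blockAA {A B : Type*} [AddCommGroup A] [AddCommGroup B] (f : A × B →+ A × B) : A →+ A :=
  (AddMonoidHom.fst A B).comp (f.comp (AddMonoidHom.inl A B))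

def blockBB {A B : Type*} [AddCommGroup A] [AddCommGroup B] (f : A × B →+ A × B) : B →+ B :=
  (AddMonoidHom.snd A B).comp (f.comp (AddMonoidHom.inr A B))

/-- View an additive endomorphism as an element of the endomorphism monoid, so that
powers make sense. -/
def toEnd {B : Type*} [AddCommGroup B] (e : B →+ B) : AddMonoid.End B := e

/-- An additive endomorphism is nilpotent if `e^k = 0` for some `k ≥ 1`. -/
def IsNilpotentEnd {B : Type*} [AddCommGroup B] (e : B →+ B) : Prop :=
  ∃ k : ℕ, 1 ≤ k ∧ toEnd e ^ k = 0

/-- Algebraic core of Proposition 3.4 (`prop_redu_end`): suppose `End(B)` is commutative and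
every additive endomorphism of `B` factoring through `A` is nilpotent.  If `f` is a bijective
additive endomorphism of `A × B` whose block `f_AA` is an automorphism of `A`, then `f_BB`
is an automorphism of `B`. -/
theorem blockBB_bijective_of_commutative_nilpotent {A B : Type*}
    [AddCommGroup A] [AddCommGroup B]
    (hcomm : ∀ e₁ e₂ : B →+ B, e₁.comp e₂ = e₂.comp e₁)
    (hnil : ∀ e : B →+ B, (∃ (u : B →+ A) (v : A →+ B), e = v.comp u) → IsNilpotentEnd e)
    (f : A × B →+ A × B) (hf : Function.Bijective f)
    (hAA : Function.Bijective (blockAA f)) :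
    Function.Bijective (blockBB f) := by
  classical
  -- the inverse of `f` as an additive hom
  set g : A × B →+ A × B := (AddEquiv.ofBijective f hf).symm.toAddMonoidHom with hg
  have hgf : ∀ x : A × B, g (f x) = x := fun x =>
    (AddEquiv.ofBijective f hf).symm_apply_apply x
  have hfg : ∀ x : A × B, f (g x) = x := fun x =>
    (AddEquiv.ofBijective f hf).apply_symm_apply x
  -- auxiliary blocks
  set bf : B →+ A := (AddMonoidHom.fst A B).comp (f.comp (AddMonoidHom.inr A B)) with hbf
  set cg : A →+ B := (AddMonoidHom.snd A B).comp (g.comp (AddMonoidHom.inl A B)) with hcg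
  set bg : B →+ A := (AddMonoidHom.fst A B).comp (g.comp (AddMonoidHom.inr A B)) with hbg
  set cf : A →+ B := (AddMonoidHom.snd A B).comp (f.comp (AddMonoidHom.inl A B)) with hcf
  -- key identities:  g_BB ∘ f_BB + c_g ∘ b_f = 1  and  f_BB ∘ g_BB + c_f ∘ b_g = 1
  have key1 : (blockBB g).comp (blockBB f) + cg.comp bf = AddMonoidHom.id B := by
    ext x
    have h : g (f (0, x)) = (0, x) := hgf _
    have hsplit : (f (0, x) : A × B) = ((f (0, x)).1, 0) + (0, (f (0, x)).2) := by
      simp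
    calc (blockBB g) ((blockBB f) x) + cg (bf x)
        = (g (0, (f (0, x)).2)).2 + (g ((f (0, x)).1, 0)).2 := rfl
      _ = (g (((f (0, x)).1, 0) + (0, (f (0, x)).2))).2 := by
          rw [map_add]; simp [add_comm]
      _ = x := by rw [← hsplit, h]
  have key2 : (blockBB f).comp (blockBB g) + cf.comp bg = AddMonoidHom.id B := by
    ext x
    have h : f (g (0, x)) = (0, x) := hfg _
    have hsplit : (g (0, x) : A × B) = ((g (0, x)).1, 0) + (0, (g (0, x)).2) := by
      simp
    calc (blockBB f) ((blockBB g) x) + cf (bg x)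
        = (f (0, (g (0, x)).2)).2 + (f ((g (0, x)).1, 0)).2 := rfl
      _ = (f (((g (0, x)).1, 0) + (0, (g (0, x)).2))).2 := by
          rw [map_add]; simp [add_comm]
      _ = x := by rw [← hsplit, h]
  -- the correction terms are nilpotent
  have hn1 : IsNilpotentEnd (cg.comp bf) := hnil _ ⟨bf, cg, rfl⟩
  have hn2 : IsNilpotentEnd (cf.comp bg) := hnil _ ⟨bg, cf, rfl⟩
  -- hence the composites are units in the endomorphism ring
  have hu : ∀ (d : B →+ B) (n : B →+ B), IsNilpotentEnd n → d + n = AddMonoidHom.id B →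
      Function.Bijective d := by
    intro d n hn hdn
    obtain ⟨k, _, hk⟩ := hn
    have : IsNilpotent (toEnd n) := ⟨k, hk⟩
    have hunit : IsUnit (1 - toEnd n) := this.isUnit_one_sub
    have hd : toEnd d = 1 - toEnd n := by
      have h : toEnd d + toEnd n = 1 := hdn
      exact eq_sub_of_add_eq h
    rw [← hd] at hunit
    obtain ⟨u, hu⟩ := hunit
    refine Function.bijective_iff_has_inverse.mpr ⟨u.inv, fun x => ?_, fun x => ?_⟩
    · have := DFunLike.congr_fun (u.inv_mul) x
      simp [hu] at this; exact this
    · have := DFunLike.congr_fun (u.mul_inv) x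
      simp [hu] at this; exact this
  have h1 : Function.Bijective ((blockBB g).comp (blockBB f)) := hu _ _ hn1 key1
  have h2 : Function.Bijective ((blockBB f).comp (blockBB g)) := hu _ _ hn2 key2
  have h1' : Function.Injective (⇑(blockBB g) ∘ ⇑(blockBB f)) := by
    simpa [AddMonoidHom.coe_comp] using h1.injective
  have h2' : Function.Surjective (⇑(blockBB f) ∘ ⇑(blockBB g)) := by
    simpa [AddMonoidHom.coe_comp] using h2.surjective
  exact ⟨h1'.of_comp, h2'.of_comp⟩
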